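/- The function g₂(x) := (1-c₂)e^{ρ₂⁺(x-a)} + c₂ e^{ρ₁⁺(x-a)} for x > a and g₂(x) := e^{ρ₂⁻(x-a)} for x ≤ a satisfies (1/2)g₂''(x) + μ₊ g₂'(x) = q g₂(x) for x > a, (1/2)g₂''(x) + μ₋ g₂'(x) = q g₂(x) for x < a, and (1+β)g₂'(a+) = (1-β)g₂'(a-). -/

import Mathlib

lemma hE_aux (ρ a x : ℝ) :
    HasDerivAt (fun y => Real.exp (ρ*(y-a))) (ρ * Real.exp (ρ*(x-a))) x := by
  have h := (((hasDerivAt_id x).sub_const a).const_mul ρ).exp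
  simpa [mul_comm] using h

lemma hF_aux (c1 c2 ρ σ a x : ℝ) :
    HasDerivAt (fun y => c1 * Real.exp (ρ*(y-a)) + c2 * Real.exp (σ*(y-a)))
      (c1*ρ * Real.exp (ρ*(x-a)) + c2*σ * Real.exp (σ*(x-a))) x := by
  have h := ((hE_aux ρ a x).const_mul c1).add ((hE_aux σ a x).const_mul c2)
  simp only [mul_assoc]; exact h

lemma derivF_aux (c1 c2 ρ σ a : ℝ) :
    deriv (fun y => c1 * Real.exp (ρ*(y-a)) + c2 * Real.exp (σ*(y-a)))
      = fun y => (c1*ρ) * Real.exp (ρ*(y-a)) + (c2*σ) * Real.exp (σ*(y-a)) :=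
  funext fun y => (hF_aux c1 c2 ρ σ a y).deriv

theorem g2_ode (q a μp μm β : ℝ) (hq : 0 < q) (ha : 0 < a)
    (hβ : β ∈ Set.Ioo (-1 : ℝ) 1)
    (ρ1m ρ2m ρ1p ρ2p c₂ : ℝ)
    (hρ1m : ρ1m = -(μm + Real.sqrt (μm^2 + 2*q)))
    (hρ2m : ρ2m = -μm + Real.sqrt (μm^2 + 2*q))
    (hρ1p : ρ1p = -(μp + Real.sqrt (μp^2 + 2*q)))
    (hρ2p : ρ2p = -μp + Real.sqrt (μp^2 + 2*q))
    (hc₂ : c₂ = ((1+β)*ρ2p - (1-β)*ρ2m) / ((1+β)*(ρ2p - ρ1p)))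
    (g₂ : ℝ → ℝ)
    (hg₂ : ∀ x, g₂ x = if a < x then (1-c₂) * Real.exp (ρ2p*(x-a)) + c₂ * Real.exp (ρ1p*(x-a))
      else Real.exp (ρ2m*(x-a))) :
    (∀ x, a < x → (1/2) * deriv (deriv g₂) x + μp * deriv g₂ x = q * g₂ x) ∧
    (∀ x, x < a → (1/2) * deriv (deriv g₂) x + μm * deriv g₂ x = q * g₂ x) ∧
    (1+β) * derivWithin g₂ (Set.Ici a) a = (1-β) * derivWithin g₂ (Set.Iic a) a := by
  obtain ⟨hβ1, hβ2⟩ := hβ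
  have hsp : Real.sqrt (μp^2 + 2*q) ^ 2 = μp^2 + 2*q := Real.sq_sqrt (by positivity)
  have hsm : Real.sqrt (μm^2 + 2*q) ^ 2 = μm^2 + 2*q := Real.sq_sqrt (by positivity)
  have rootp1 : (1/2)*ρ1p^2 + μp*ρ1p = q := by rw [hρ1p]; linear_combination (1/2) * hsp
  have rootp2 : (1/2)*ρ2p^2 + μp*ρ2p = q := by rw [hρ2p]; linear_combination (1/2) * hsp
  have rootm2 : (1/2)*ρ2m^2 + μm*ρ2m = q := by rw [hρ2m]; linear_combination (1/2) * hsm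
  refine ⟨?_, ?_, ?_⟩
  · intro x hx
    set f : ℝ → ℝ := fun y => (1-c₂) * Real.exp (ρ2p*(y-a)) + c₂ * Real.exp (ρ1p*(y-a)) with hf
    have hEq : g₂ =ᶠ[nhds x] f := by
      filter_upwards [eventually_gt_nhds hx] with y hy
      simp [hg₂, hy, hf]
    have hd1 : deriv g₂ x = (1-c₂)*ρ2p * Real.exp (ρ2p*(x-a)) + c₂*ρ1p * Real.exp (ρ1p*(x-a)) := by
      rw [hEq.deriv_eq]; exact (hF_aux _ _ _ _ _ _).deriv
    have hd2 : deriv (deriv g₂) x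
        = ((1-c₂)*ρ2p)*ρ2p * Real.exp (ρ2p*(x-a)) + (c₂*ρ1p)*ρ1p * Real.exp (ρ1p*(x-a)) := by
      rw [hEq.deriv.deriv_eq, derivF_aux]
      exact (hF_aux _ _ _ _ _ _).deriv
    rw [hd1, hd2, hg₂ x, if_pos hx]
    linear_combination ((1-c₂) * Real.exp (ρ2p*(x-a))) * rootp2
      + (c₂ * Real.exp (ρ1p*(x-a))) * rootp1
  · intro x hx
    have hEq : g₂ =ᶠ[nhds x] fun y => Real.exp (ρ2m*(y-a)) := by
      filter_upwards [eventually_lt_nhds hx] with y hy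
      simp [hg₂, not_lt.mpr hy.le]
    have hd1 : deriv g₂ x = ρ2m * Real.exp (ρ2m*(x-a)) := by
      rw [hEq.deriv_eq]; exact (hE_aux _ _ _).deriv
    have hDE : deriv (fun y => Real.exp (ρ2m*(y-a))) = fun y => ρ2m * Real.exp (ρ2m*(y-a)) :=
      funext fun y => (hE_aux _ _ _).deriv
    have hd2 : deriv (deriv g₂) x = ρ2m * (ρ2m * Real.exp (ρ2m*(x-a))) := by
      rw [hEq.deriv.deriv_eq, hDE]
      simpa [mul_assoc, mul_comm, mul_left_comm] using ((hE_aux ρ2m a x).const_mul ρ2m).deriv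
    rw [hd1, hd2, hg₂ x, if_neg (not_lt.mpr hx.le)]
    linear_combination (Real.exp (ρ2m*(x-a))) * rootm2
  · have hb : (0:ℝ) < 1 + β := by linarith
    have hs : 0 < Real.sqrt (μp^2 + 2*q) := Real.sqrt_pos.mpr (by positivity)
    have hdiff : ρ2p - ρ1p = 2 * Real.sqrt (μp^2 + 2*q) := by rw [hρ2p, hρ1p]; ring
    have hne : ρ2p - ρ1p ≠ 0 := by rw [hdiff]; positivity
    have hR : derivWithin g₂ (Set.Ici a) a = (1-c₂)*ρ2p + c₂*ρ1p := by
      have heq : Set.EqOn g₂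
          (fun y => (1-c₂) * Real.exp (ρ2p*(y-a)) + c₂ * Real.exp (ρ1p*(y-a))) (Set.Ici a) := by
        intro y hy
        rcases eq_or_lt_of_le (Set.mem_Ici.mp hy) with h | h
        · simp [hg₂, ← h]
        · simp [hg₂, h]
      have h0 : g₂ a = (1-c₂) * Real.exp (ρ2p*(a-a)) + c₂ * Real.exp (ρ1p*(a-a)) :=
        heq Set.self_mem_Ici
      rw [derivWithin_congr heq h0,
        (hF_aux (1-c₂) c₂ ρ2p ρ1p a a).differentiableAt.derivWithin
          (uniqueDiffOn_Ici a a Set.self_mem_Ici)]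
      have := (hF_aux (1-c₂) c₂ ρ2p ρ1p a a).deriv
      rw [this]; simp
    have hL : derivWithin g₂ (Set.Iic a) a = ρ2m := by
      have heq : Set.EqOn g₂ (fun y => Real.exp (ρ2m*(y-a))) (Set.Iic a) := by
        intro y hy
        simp [hg₂, not_lt.mpr (Set.mem_Iic.mp hy)]
      have h0 : g₂ a = Real.exp (ρ2m*(a-a)) := heq Set.self_mem_Iic
      rw [derivWithin_congr heq h0,
        (hE_aux ρ2m a a).differentiableAt.derivWithin (uniqueDiffOn_Iic a a Set.self_mem_Iic),
        (hE_aux ρ2m a a).deriv]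
      simp
    rw [hR, hL, hc₂]
    field_simp
    ring
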